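/- For λ ∈ ℝ^n and an integer r with 1 ≤ r ≤ n-1, if σ_r(λ) ≠ 0 then σ_{r-1}(λ)·σ_{r+1}(λ) < σ_r(λ)². -/

import Mathlib

/-- The k-th elementary symmetric function on ℝ^n. -/
noncomputable def esymm (n k : ℕ) (l : Fin n → ℝ) : ℝ :=
  ∑ s ∈ Finset.powersetCard k (Finset.univ : Finset (Fin n)), ∏ i ∈ s, l i

open Polynomial Finset

lemma esymm_self (m : ℕ) (f : Fin m → ℝ) : esymm m m f = ∏ i, f i := by
  rw [esymm]
  rw [show Finset.powersetCard m (Finset.univ : Finset (Fin m)) = {Finset.univ} by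
    simpa using Finset.powersetCard_self (Finset.univ : Finset (Fin m))]
  rw [Finset.sum_singleton]

lemma esymm_compl (m k : ℕ) (hk : k ≤ m) (f : Fin m → ℝ) :
    esymm m (m - k) f = ∑ t ∈ Finset.powersetCard k (Finset.univ : Finset (Fin m)),
      ∏ j ∈ tᶜ, f j := by
  rw [esymm]
  refine Finset.sum_nbij' (i := fun s => sᶜ) (j := fun t => tᶜ) ?_ ?_ ?_ ?_ ?_
  · intro s hs
    rw [Finset.mem_powersetCard_univ] at hs ⊢
    rw [Finset.card_compl, hs, Fintype.card_fin]
    omega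
  · intro t ht
    rw [Finset.mem_powersetCard_univ] at ht ⊢
    rw [Finset.card_compl, ht, Fintype.card_fin]
  · intro s _; simp
  · intro t _; simp
  · intro s _; rw [compl_compl]

lemma esymm_pred (m : ℕ) (hm : 1 ≤ m) (f : Fin m → ℝ) :
    esymm m (m - 1) f = ∑ i, ∏ j ∈ Finset.univ.erase i, f j := by
  rw [esymm_compl m 1 hm f, Finset.powersetCard_one, Finset.sum_map]
  refine Finset.sum_congr rfl fun i _ => ?_
  congr 1
  simp [Function.Embedding.coeFn_mk, Finset.compl_singleton]

lemma esymm_pred2 (m : ℕ) (hm : 2 ≤ m) (f : Fin m → ℝ) :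
    2 * esymm m (m - 2) f =
      ∑ p ∈ (Finset.univ : Finset (Fin m)).offDiag,
        ∏ j ∈ ({p.1, p.2} : Finset (Fin m))ᶜ, f j := by
  rw [esymm_compl m 2 hm f]
  rw [← Finset.sum_fiberwise_of_maps_to
    (g := fun p : Fin m × Fin m => ({p.1, p.2} : Finset (Fin m)))
    (t := Finset.powersetCard 2 (Finset.univ : Finset (Fin m)))
    (fun p hp => by
      rw [Finset.mem_powersetCard_univ]
      rw [Finset.mem_offDiag] at hp
      rw [Finset.card_pair hp.2.2])]
  rw [Finset.mul_sum]
  refine Finset.sum_congr rfl fun t ht => ?_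
  rw [Finset.mem_powersetCard_univ] at ht
  obtain ⟨a, b, hab, rfl⟩ := Finset.card_eq_two.mp ht
  have hfilter : (Finset.univ.offDiag.filter
      (fun p : Fin m × Fin m => ({p.1, p.2} : Finset (Fin m)) = {a, b}))
      = {(a, b), (b, a)} := by
    ext p
    simp only [Finset.mem_filter, Finset.mem_offDiag, Finset.mem_univ, true_and,
      Finset.mem_insert, Finset.mem_singleton]
    constructor
    · rintro ⟨hne, hpair⟩
      have h1 : p.1 ∈ ({a, b} : Finset (Fin m)) := by
        rw [← hpair]; simp
      have h2 : p.2 ∈ ({a, b} : Finset (Fin m)) := by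
        rw [← hpair]; simp
      simp only [Finset.mem_insert, Finset.mem_singleton] at h1 h2
      rcases h1 with h1 | h1 <;> rcases h2 with h2 | h2
      · exact absurd (h1.trans h2.symm) hne
      · left; exact Prod.ext h1 h2
      · right; exact Prod.ext h1 h2
      · exact absurd (h1.trans h2.symm) hne
    · rintro (rfl | rfl)
      · exact ⟨hab, rfl⟩
      · exact ⟨hab.symm, Finset.pair_comm b a⟩
  rw [hfilter, Finset.sum_pair (by simp [hab, Prod.ext_iff])]
  have : ({(b : Fin m), a} : Finset (Fin m)) = {a, b} := Finset.pair_comm b a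
  simp only [this]
  ring

lemma key_ineq (m : ℕ) (hm : 2 ≤ m) (f : Fin m → ℝ) :
    2 * m * (esymm m m f * esymm m (m - 2) f) ≤ ((m : ℝ) - 1) * esymm m (m - 1) f ^ 2 := by
  set P : Fin m → ℝ := fun i => ∏ j ∈ Finset.univ.erase i, f j with hP
  have hpred : esymm m (m - 1) f = ∑ i, P i := esymm_pred m (by omega) f
  -- pointwise identity
  have hpt : ∀ p ∈ (Finset.univ : Finset (Fin m)).offDiag,
      (∏ i, f i) * ∏ j ∈ ({p.1, p.2} : Finset (Fin m))ᶜ, f j = P p.1 * P p.2 := by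
    rintro ⟨i, j⟩ hp
    rw [Finset.mem_offDiag] at hp
    obtain ⟨-, -, hij⟩ := hp
    simp only []
    have hcompl : ({i, j} : Finset (Fin m))ᶜ = (Finset.univ.erase i).erase j := by
      ext x
      simp [Finset.mem_compl, Finset.mem_insert, not_or, and_comm]
    have hji : j ∈ Finset.univ.erase i := Finset.mem_erase.2 ⟨hij.symm, Finset.mem_univ j⟩
    have hPi : P i = f j * ∏ x ∈ (Finset.univ.erase i).erase j, f x :=
      (Finset.mul_prod_erase _ f hji).symm
    have hij' : i ∈ Finset.univ.erase j := Finset.mem_erase.2 ⟨hij, Finset.mem_univ i⟩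
    have hPj : P j = f i * ∏ x ∈ (Finset.univ.erase i).erase j, f x := by
      rw [hP]; simp only []
      rw [← Finset.mul_prod_erase _ f hij', Finset.erase_right_comm]
    have hprod : ∏ x, f x = f i * P i := (Finset.mul_prod_erase _ f (Finset.mem_univ i)).symm
    rw [hcompl, hprod, hPi, hPj]
    ring
  -- sum identity: 2 * e_m * e_{m-2} = S^2 - T
  have hdiag : ∑ p ∈ (Finset.univ : Finset (Fin m)).diag, P p.1 * P p.2 = ∑ i, P i ^ 2 := by
    refine (Finset.sum_nbij' (i := fun p => p.1) (j := fun a => (a, a)) ?_ ?_ ?_ ?_ ?_).symm.symm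
    · intro p hp; exact Finset.mem_univ _
    · intro a _; exact Finset.mem_diag.2 ⟨Finset.mem_univ _, rfl⟩
    · intro p hp
      obtain ⟨-, h⟩ := Finset.mem_diag.1 hp
      exact Prod.ext_iff.mpr ⟨rfl, h⟩
    · intro a _; rfl
    · intro p hp
      obtain ⟨-, h⟩ := Finset.mem_diag.1 hp
      rw [← h]; ring
  have hsq : (∑ i, P i) ^ 2 = ∑ p ∈ (Finset.univ : Finset (Fin m)) ×ˢ Finset.univ,
      P p.1 * P p.2 := by
    rw [Finset.sum_product]
    rw [sq, Finset.sum_mul_sum]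
  have hsum2 : 2 * (esymm m m f * esymm m (m - 2) f)
      = (∑ i, P i) ^ 2 - ∑ i, P i ^ 2 := by
    have : 2 * (esymm m m f * esymm m (m - 2) f)
        = (∏ i, f i) * (2 * esymm m (m - 2) f) := by rw [esymm_self]; ring
    rw [this, esymm_pred2 m hm f, Finset.mul_sum]
    rw [Finset.sum_congr rfl hpt]
    rw [hsq, ← Finset.diag_union_offDiag (Finset.univ : Finset (Fin m)),
      Finset.sum_union (Finset.disjoint_diag_offDiag _), hdiag]
    ring
  -- Cauchy-Schwarz
  have hcs : (∑ i, P i) ^ 2 ≤ (m : ℝ) * ∑ i, P i ^ 2 := by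
    have := sq_sum_le_card_mul_sum_sq (s := (Finset.univ : Finset (Fin m))) (f := P)
    simpa using this
  have h2 : 2 * (m : ℝ) * (esymm m m f * esymm m (m - 2) f)
      = (m : ℝ) * (∑ i, P i) ^ 2 - (m : ℝ) * ∑ i, P i ^ 2 := by
    linear_combination (m : ℝ) * hsum2
  rw [hpred, h2]
  linarith [hcs]

lemma key_multiset (s : Multiset ℝ) (hm : 2 ≤ Multiset.card s) :
    2 * (Multiset.card s : ℝ) * (s.esymm (Multiset.card s) * s.esymm (Multiset.card s - 2))
      ≤ ((Multiset.card s : ℝ) - 1) * s.esymm (Multiset.card s - 1) ^ 2 := by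
  obtain ⟨l, rfl⟩ : ∃ l : List ℝ, ↑l = s := ⟨s.toList, s.coe_toList⟩
  have hs : (Finset.univ : Finset (Fin l.length)).val.map l.get = ↑l := by
    rw [Fin.univ_val_map, List.ofFn_get]
  have he : ∀ k, Multiset.esymm ↑l k = esymm l.length k l.get := by
    intro k; rw [← hs, Finset.esymm_map_val]; rfl
  simp only [Multiset.coe_card] at hm ⊢
  rw [he, he, he]
  exact key_ineq l.length hm l.get

lemma deriv_rr (p : ℝ[X]) (h : Multiset.card p.roots = p.natDegree) :
    Multiset.card (derivative p).roots = (derivative p).natDegree := by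
  rcases Nat.eq_zero_or_pos p.natDegree with h0 | h0
  · rw [Polynomial.eq_C_of_natDegree_eq_zero h0]
    simp
  · have hle : (derivative p).natDegree ≤ p.natDegree - 1 := p.natDegree_derivative_le
    have hcard := p.card_roots_le_derivative
    have hcard' := (derivative p).card_roots'
    omega

lemma iter_rr (k : ℕ) (p : ℝ[X]) (h : Multiset.card p.roots = p.natDegree) :
    Multiset.card (derivative^[k] p).roots = (derivative^[k] p).natDegree := by
  induction k with
  | zero => simpa using h
  | succ k ih => rw [Function.iterate_succ_apply']; exact deriv_rr _ ih

set_option maxHeartbeats 1000000 in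
/-- Strict Newton inequality when σ_r(λ) ≠ 0. -/
theorem newton_inequality_strict (n r : ℕ) (hr : 1 ≤ r) (hrn : r ≤ n - 1)
    (l : Fin n → ℝ) (hne : esymm n r l ≠ 0) :
    esymm n (r-1) l * esymm n (r+1) l < (esymm n r l) ^ 2 := by
  have hn2 : 2 ≤ n := by omega
  have hrn' : r + 1 ≤ n := by omega
  set d : ℕ := n - r - 1 with hd
  set P : ℝ[X] := ∏ i : Fin n, (X + C (l i)) with hPdef
  have hmonic : P.Monic := monic_prod_of_monic _ _ fun i _ => monic_X_add_C _
  have hPdeg : P.natDegree = n := by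
    rw [hPdef, natDegree_prod_of_monic _ _ fun i _ => monic_X_add_C _]
    simp
  have hP2 : P = ((Finset.univ.val.map fun i : Fin n => -l i).map fun a => X - C a).prod := by
    rw [hPdef, Finset.prod]
    rw [Multiset.map_map]
    apply congrArg
    apply Multiset.map_congr rfl
    intro x _
    simp [sub_neg_eq_add]
  have hProots : Multiset.card P.roots = P.natDegree := by
    rw [hPdeg, hP2, roots_multiset_prod_X_sub_C]
    simp
  have hPcoeff : ∀ k, k ≤ n → P.coeff k = esymm n (n - k) l := by
    intro k hk
    rw [hPdef, Finset.prod_X_add_C_coeff Finset.univ l (by simpa using hk)]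
    simp [esymm]
  set Q : ℝ[X] := derivative^[d] P with hQdef
  have hQroots : Multiset.card Q.roots = Q.natDegree := iter_rr d P hProots
  have hQcoeff : ∀ j, Q.coeff j = ((j + d).descFactorial d : ℝ) * P.coeff (j + d) := by
    intro j
    rw [hQdef, Polynomial.coeff_iterate_derivative, nsmul_eq_mul]
  have hQdeg : Q.natDegree = r + 1 := by
    refine le_antisymm ?_ ?_
    · have h1 : Q.natDegree ≤ P.natDegree - d := P.natDegree_iterate_derivative d
      omega
    · apply le_natDegree_of_ne_zero
      rw [hQcoeff]
      have h1 : r + 1 + d = n := by omega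
      rw [h1]
      have h2 : P.coeff n = 1 := by
        have := hmonic.coeff_natDegree
        rwa [hPdeg] at this
      rw [h2, mul_one]
      have hp : n.descFactorial d ≠ 0 := by
        rw [Ne, Nat.descFactorial_eq_zero_iff_lt]; omega
      exact_mod_cast hp
  have hQne : Q ≠ 0 := fun h => by simp [h] at hQdeg
  have hc : Q.leadingCoeff ≠ 0 := leadingCoeff_ne_zero.mpr hQne
  have hfac := Polynomial.C_leadingCoeff_mul_prod_multiset_X_sub_C (p := Q) hQroots
  set B : Multiset ℝ := Q.roots.map (fun a => -a) with hB
  have hBcard : Multiset.card B = r + 1 := by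
    rw [hB, Multiset.card_map, hQroots, hQdeg]
  have hQB : ∀ j, j ≤ r + 1 → Q.coeff j = Q.leadingCoeff * B.esymm (r + 1 - j) := by
    intro j hj
    conv_lhs => rw [← hfac]
    rw [coeff_C_mul]
    have h3 : (Q.roots.map fun a => X - C a).prod = (B.map fun a => X + C a).prod := by
      rw [hB, Multiset.map_map]
      apply congrArg
      apply Multiset.map_congr rfl
      intro x _
      simp [sub_eq_add_neg]
    rw [h3, Multiset.prod_X_add_C_coeff B (by rw [hBcard]; exact hj), hBcard]
  have hkey := key_multiset B (by rw [hBcard]; omega)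
  rw [hBcard] at hkey
  have e1 : r + 1 - 2 = r - 1 := by omega
  have e2 : r + 1 - 1 = r := by omega
  rw [e1, e2] at hkey
  push_cast at hkey
  -- abbreviations
  set c : ℝ := Q.leadingCoeff
  set σm : ℝ := esymm n (r-1) l
  set σ0 : ℝ := esymm n r l
  set σp : ℝ := esymm n (r+1) l
  set a0 : ℕ := d.descFactorial d with ha0
  set a1 : ℕ := (1+d).descFactorial d with ha1
  set a2 : ℕ := (2+d).descFactorial d with ha2
  -- coefficient identifications
  have h0 : c * B.esymm (r+1) = (a0 : ℝ) * σp := by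
    have u := hQB 0 (by omega)
    have v := hQcoeff 0
    rw [hPcoeff (0+d) (by omega)] at v
    have e : n - (0 + d) = r + 1 := by omega
    rw [e] at v
    have e' : r + 1 - 0 = r + 1 := by omega
    rw [e'] at u
    rw [← u, v]
    norm_num [ha0]
    rfl
  have h1 : c * B.esymm r = (a1 : ℝ) * σ0 := by
    have u := hQB 1 (by omega)
    have v := hQcoeff 1
    rw [hPcoeff (1+d) (by omega)] at v
    have e : n - (1 + d) = r := by omega
    rw [e] at v
    have e' : r + 1 - 1 = r := by omega
    rw [e'] at u
    rw [← u, v]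
  have h2 : c * B.esymm (r-1) = (a2 : ℝ) * σm := by
    have u := hQB 2 (by omega)
    have v := hQcoeff 2
    rw [hPcoeff (2+d) (by omega)] at v
    have e : n - (2 + d) = r - 1 := by omega
    rw [e] at v
    have e' : r + 1 - 2 = r - 1 := by omega
    rw [e'] at u
    rw [← u, v]
  -- multiply key inequality by c^2
  have hfinal : 2 * ((r:ℝ)+1) * (((a0:ℝ)*σp) * ((a2:ℝ)*σm)) ≤ (r:ℝ) * ((a1:ℝ)*σ0)^2 := by
    have hmul := mul_le_mul_of_nonneg_left hkey (sq_nonneg c)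
    calc 2 * ((r:ℝ)+1) * (((a0:ℝ)*σp) * ((a2:ℝ)*σm))
        = c^2 * (2 * ((r:ℝ)+1) * (B.esymm (r+1) * B.esymm (r-1))) := by
          rw [← h0, ← h2]; ring
      _ ≤ c^2 * (((r:ℝ)+1-1) * (B.esymm r)^2) := hmul
      _ = (r:ℝ) * (c * B.esymm r)^2 := by ring
      _ = (r:ℝ) * ((a1:ℝ)*σ0)^2 := by rw [h1]
  -- descFactorial relations
  have na1 : a1 = (d+1) * a0 := by
    have v : (d+1).descFactorial (d+1) = (d+1) * d.descFactorial d :=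
      Nat.succ_descFactorial_succ d d
    have u : (d+1).descFactorial (d+1) = (d+1).descFactorial d := by
      rw [Nat.descFactorial_succ]
      rw [show d + 1 - d = 1 from by omega, one_mul]
    rw [ha1, ha0, Nat.add_comm 1 d, ← u, v]
  have na2 : 2 * a2 = (d+2) * a1 := by
    have v : (d+2).descFactorial (d+1) = (d+2) * (d+1).descFactorial d :=
      Nat.succ_descFactorial_succ (d+1) d
    have u : (d+2).descFactorial (d+1) = 2 * (d+2).descFactorial d := by
      rw [Nat.descFactorial_succ]
      rw [show d + 2 - d = 2 from by omega]
    rw [ha2, ha1, Nat.add_comm 2 d, Nat.add_comm 1 d, ← u, v]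
  have ha0pos : (0:ℝ) < (a0:ℝ) := by
    have hp : a0 ≠ 0 := by
      rw [ha0, Ne, Nat.descFactorial_eq_zero_iff_lt]; omega
    exact_mod_cast Nat.pos_of_ne_zero hp
  -- coefficient comparison
  have hcmp : (r:ℝ) * (a1:ℝ)^2 < 2 * ((r:ℝ)+1) * (a0:ℝ) * (a2:ℝ) := by
    have c1 : (a1:ℝ) = ((d:ℝ)+1) * (a0:ℝ) := by exact_mod_cast congrArg (Nat.cast : ℕ → ℝ) na1
    have c2 : 2 * (a2:ℝ) = ((d:ℝ)+2) * (a1:ℝ) := by exact_mod_cast congrArg (Nat.cast : ℕ → ℝ) na2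
    have hr1 : (1:ℝ) ≤ (r:ℝ) := by exact_mod_cast hr
    have hd0 : (0:ℝ) ≤ (d:ℝ) := Nat.cast_nonneg d
    have key2 : (r:ℝ) * ((d:ℝ)+1) < ((r:ℝ)+1)*((d:ℝ)+2) := by nlinarith
    have step : (r:ℝ)*(a1:ℝ)^2 = ((r:ℝ)*((d:ℝ)+1)) * (((d:ℝ)+1)*(a0:ℝ)^2) := by
      rw [c1]; ring
    have step2 : 2*((r:ℝ)+1)*(a0:ℝ)*(a2:ℝ)
        = (((r:ℝ)+1)*((d:ℝ)+2)) * (((d:ℝ)+1)*(a0:ℝ)^2) := by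
      have h4 : 2*(2*((r:ℝ)+1)*(a0:ℝ)*(a2:ℝ))
          = 2*((((r:ℝ)+1)*((d:ℝ)+2)) * (((d:ℝ)+1)*(a0:ℝ)^2)) := by
        calc 2*(2*((r:ℝ)+1)*(a0:ℝ)*(a2:ℝ))
            = 2*((r:ℝ)+1)*(a0:ℝ)*(2*(a2:ℝ)) := by ring
          _ = 2*((r:ℝ)+1)*(a0:ℝ)*(((d:ℝ)+2)*(a1:ℝ)) := by rw [c2]
          _ = 2*((r:ℝ)+1)*(a0:ℝ)*(((d:ℝ)+2)*(((d:ℝ)+1) * (a0:ℝ))) := by rw [c1]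
          _ = 2*((((r:ℝ)+1)*((d:ℝ)+2)) * (((d:ℝ)+1)*(a0:ℝ)^2)) := by ring
      linarith
    rw [step, step2]
    refine mul_lt_mul_of_pos_right key2 ?_
    have : (0:ℝ) < ((d:ℝ)+1) := by positivity
    exact mul_pos this (pow_pos ha0pos 2)
  -- conclude
  have hS : (0:ℝ) < σ0^2 := lt_of_le_of_ne (sq_nonneg _) (Ne.symm (pow_ne_zero 2 hne))
  have hNpos : (0:ℝ) < 2 * ((r:ℝ)+1) * (a0:ℝ) * (a2:ℝ) := by
    have hp : a2 ≠ 0 := by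
      rw [ha2, Ne, Nat.descFactorial_eq_zero_iff_lt]; omega
    have h2' : (0:ℝ) < (a2:ℝ) := by exact_mod_cast Nat.pos_of_ne_zero hp
    have h2'' : (0:ℝ) ≤ (r:ℝ) := Nat.cast_nonneg r
    nlinarith [ha0pos]
  have chain : 2 * ((r:ℝ)+1) * (a0:ℝ) * (a2:ℝ) * (σp * σm)
      < 2 * ((r:ℝ)+1) * (a0:ℝ) * (a2:ℝ) * σ0^2 := by
    calc 2 * ((r:ℝ)+1) * (a0:ℝ) * (a2:ℝ) * (σp * σm)
        = 2 * ((r:ℝ)+1) * (((a0:ℝ)*σp) * ((a2:ℝ)*σm)) := by ring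
      _ ≤ (r:ℝ) * ((a1:ℝ)*σ0)^2 := hfinal
      _ = (r:ℝ) * (a1:ℝ)^2 * σ0^2 := by ring
      _ < 2 * ((r:ℝ)+1) * (a0:ℝ) * (a2:ℝ) * σ0^2 := by
          exact mul_lt_mul_of_pos_right hcmp hS
  have := lt_of_mul_lt_mul_left chain (le_of_lt hNpos)
  calc σm * σp = σp * σm := mul_comm _ _
    _ < σ0^2 := this
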